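/- arXiv:1211.1621 — 4 statements merged into one kernel-verified Lean document; each statement's English description precedes it below -/
import Mathlib

section
/- Let n ≥ 1 and let f̃ : ℝ^{n×n} → ℝ be continuously differentiable. Then ∫_{SO(n)} skew((∇f̃(Z))ᵀ · Z) dμ(Z) = 0 (the zero n×n matrix). In particular, if f̃ is positive and its restriction to SO(n) is a probability density with respect to μ, the score map G(Z) = (1/f̃(Z))·skew((∇f̃(Z))ᵀZ) has zero mean: ∫_{SO(n)} G(Z) f̃(Z) dμ(Z) = 0. -/
open Matrix MeasureTheory Real

noncomputable section

attribute [local instance] Matrix.normedAddCommGroup Matrix.normedSpace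

/-- The special orthogonal group `SO(n)`, as a set of `n × n` real matrices. -/
def SO (n : ℕ) : Set (Matrix (Fin n) (Fin n) ℝ) :=
  {A | A * Aᵀ = 1 ∧ A.det = 1}

instance {n : ℕ} : MeasurableSpace (Matrix (Fin n) (Fin n) ℝ) :=
  (inferInstance : MeasurableSpace (Fin n → Fin n → ℝ))

/-- `μ` is the Haar probability measure of `SO(n)`. -/
def IsHaarSO (n : ℕ) (μ : Measure (Matrix (Fin n) (Fin n) ℝ)) : Prop :=
  IsProbabilityMeasure μ ∧ μ (SO n)ᶜ = 0 ∧
    (∀ g ∈ SO n, Measure.map (fun Z => g * Z) μ = μ) ∧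
    (∀ g ∈ SO n, Measure.map (fun Z => Z * g) μ = μ)

/-- The skew-symmetric part `(A - Aᵀ)/2` of a square matrix. -/
def skewPart {n : ℕ} (A : Matrix (Fin n) (Fin n) ℝ) : Matrix (Fin n) (Fin n) ℝ :=
  (2 : ℝ)⁻¹ • (A - Aᵀ)

/-- The Euclidean (Frobenius) gradient of `f : ℝ^{n×n} → ℝ`: the matrix of partial
derivatives of `f` with respect to the entries of its argument. -/
def grad {n : ℕ} (f : Matrix (Fin n) (Fin n) ℝ → ℝ) (Z : Matrix (Fin n) (Fin n) ℝ) :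
    Matrix (Fin n) (Fin n) ℝ :=
  Matrix.of fun i j => fderiv ℝ f Z (Matrix.single i j 1)

/-- The score map `G(Z) = (1 / f(Z)) · skew((∇f(Z))ᵀ Z)`. -/
def scoreG {n : ℕ} (f : Matrix (Fin n) (Fin n) ℝ → ℝ) (Z : Matrix (Fin n) (Fin n) ℝ) :
    Matrix (Fin n) (Fin n) ℝ :=
  (f Z)⁻¹ • skewPart ((grad f Z)ᵀ * Z)

/-! ### Auxiliary material -/

abbrev Mat (n : ℕ) := Matrix (Fin n) (Fin n) ℝ

instance {n : ℕ} : BorelSpace (Mat n) := Pi.borelSpace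

instance {n : ℕ} : SecondCountableTopology (Mat n) :=
  inferInstanceAs (SecondCountableTopology (Fin n → Fin n → ℝ))

variable {n : ℕ}

instance instSNACGCLMMat : SeminormedAddCommGroup (Mat n →L[ℝ] ℝ) :=
  ContinuousLinearMap.toSeminormedAddCommGroup

def Smat (i j : Fin n) : Mat n := Matrix.single i i (1:ℝ) + Matrix.single j j 1
def Kmat (i j : Fin n) : Mat n := Matrix.single i j (1:ℝ) - Matrix.single j i 1
def Rrot (i j : Fin n) (t : ℝ) : Mat n :=
  1 + (Real.cos t - 1) • Smat i j + Real.sin t • Kmat i j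

variable {i j : Fin n}

lemma hSS (hij : i ≠ j) : Smat i j * Smat i j = Smat i j := by
  simp only [Smat, add_mul, mul_add, Matrix.single_mul_single_same, one_mul]
  rw [Matrix.single_mul_single_of_ne (h := hij.symm),
    Matrix.single_mul_single_of_ne (h := hij)]
  simp

lemma hKK (hij : i ≠ j) : Kmat i j * Kmat i j = -Smat i j := by
  simp only [Kmat, Smat, sub_mul, mul_sub, Matrix.single_mul_single_same, one_mul]
  rw [Matrix.single_mul_single_of_ne (h := hij.symm),
    Matrix.single_mul_single_of_ne (h := hij)]
  simp only [neg_add_rev, zero_sub, sub_zero]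
  abel

lemma hSK (hij : i ≠ j) : Smat i j * Kmat i j = Kmat i j := by
  simp only [Kmat, Smat, sub_mul, mul_sub, add_mul, mul_add,
    Matrix.single_mul_single_same, one_mul]
  rw [Matrix.single_mul_single_of_ne (h := hij.symm),
    Matrix.single_mul_single_of_ne (h := hij)]
  simp

lemma hKS (hij : i ≠ j) : Kmat i j * Smat i j = Kmat i j := by
  simp only [Kmat, Smat, sub_mul, mul_sub, add_mul, mul_add,
    Matrix.single_mul_single_same, one_mul]
  rw [Matrix.single_mul_single_of_ne (h := hij.symm),
    Matrix.single_mul_single_of_ne (h := hij)]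
  simp
  abel

lemma hST : (Smat i j)ᵀ = Smat i j := by
  ext a b
  simp [Smat, Matrix.single, Matrix.transpose_apply, and_comm]

lemma hKT : (Kmat i j)ᵀ = -Kmat i j := by
  ext a b
  simp [Kmat, Matrix.single, Matrix.transpose_apply, and_comm]

lemma Rmul (hij : i ≠ j) (a b : ℝ) : Rrot i j a * Rrot i j b = Rrot i j (a + b) := by
  simp only [Rrot, add_mul, mul_add, one_mul, mul_one, Matrix.smul_mul, Matrix.mul_smul,
    hSS hij, hKK hij, hSK hij, hKS hij, Real.cos_add, Real.sin_add, smul_smul, smul_neg]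
  module

lemma R_zero : Rrot i j (0:ℝ) = 1 := by simp [Rrot]

lemma R_transpose (t : ℝ) : (Rrot i j t)ᵀ = Rrot i j (-t) := by
  simp only [Rrot, transpose_add, transpose_smul, transpose_one, hST, hKT,
    Real.cos_neg, Real.sin_neg, smul_neg, neg_smul]

lemma R_mem_SO (hij : i ≠ j) (t : ℝ) : Rrot i j t ∈ SO n := by
  have horth : Rrot i j t * (Rrot i j t)ᵀ = 1 := by
    rw [R_transpose, Rmul hij, add_neg_cancel, R_zero]
  refine ⟨horth, ?_⟩
  have h2 : Rrot i j (t/2) * Rrot i j (t/2) = Rrot i j t := by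
    rw [Rmul hij]; norm_num
  have hdet2 : (Rrot i j t).det = (Rrot i j (t/2)).det ^ 2 := by
    rw [← h2, Matrix.det_mul, sq]
  have hinv : Rrot i j (t/2) * Rrot i j (-(t/2)) = 1 := by
    rw [Rmul hij, add_neg_cancel, R_zero]
  have hne : (Rrot i j (t/2)).det ≠ 0 := by
    intro h
    have h10 : (1:ℝ) = 0 := by
      have := Matrix.det_mul (Rrot i j (t/2)) (Rrot i j (-(t/2)))
      rw [hinv, Matrix.det_one, h, zero_mul] at this
      exact this
    exact one_ne_zero h10
  have hsq : (Rrot i j t).det ^ 2 = 1 := by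
    have := congrArg Matrix.det horth
    rwa [Matrix.det_mul, Matrix.det_transpose, ← sq, Matrix.det_one] at this
  have hpos : 0 < (Rrot i j t).det := by
    rw [hdet2]
    exact lt_of_le_of_ne (sq_nonneg _) (Ne.symm (pow_ne_zero 2 hne))
  nlinarith [hsq, hpos]

lemma SO_mul {A B : Mat n} (hA : A ∈ SO n) (hB : B ∈ SO n) : A * B ∈ SO n := by
  constructor
  · rw [Matrix.transpose_mul, show A * B * (Bᵀ * Aᵀ) = A * (B * Bᵀ) * Aᵀ by
      noncomm_ring, hB.1, mul_one, hA.1]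
  · rw [Matrix.det_mul, hA.2, hB.2, mul_one]

lemma SO_norm_le_one {Z : Mat n} (hZ : Z ∈ SO n) : ‖Z‖ ≤ 1 := by
  rw [Matrix.norm_le_iff zero_le_one]
  intro a b
  have hrow : ∑ k, Z a k * Z a k = 1 := by
    have := congrFun (congrFun hZ.1 a) a
    simpa [Matrix.mul_apply, Matrix.transpose_apply, Matrix.one_apply] using this
  have h1 : Z a b * Z a b ≤ 1 := by
    rw [← hrow]
    exact Finset.single_le_sum (f := fun k => Z a k * Z a k)
      (fun k _ => mul_self_nonneg _) (Finset.mem_univ b)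
  simpa [Real.norm_eq_abs] using abs_le_one_iff_mul_self_le_one.2 h1

lemma matNorm_mul_le (A B : Mat n) : ‖A * B‖ ≤ n * ‖A‖ * ‖B‖ := by
  rw [Matrix.norm_le_iff (by positivity)]
  intro a b
  rw [Matrix.mul_apply]
  calc ‖∑ k, A a k * B k b‖ ≤ ∑ k, ‖A a k * B k b‖ := norm_sum_le _ _
    _ ≤ ∑ _k : Fin n, ‖A‖ * ‖B‖ := Finset.sum_le_sum fun k _ => by
        rw [norm_mul]
        exact mul_le_mul (Matrix.norm_entry_le_entrywise_sup_norm A)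
          (Matrix.norm_entry_le_entrywise_sup_norm B) (norm_nonneg _) (norm_nonneg _)
    _ = n * ‖A‖ * ‖B‖ := by simp [Finset.sum_const, mul_assoc]

lemma ae_mem_SO {μ : Measure (Mat n)} (hμ : IsHaarSO n μ) : ∀ᵐ Z ∂μ, Z ∈ SO n := by
  rw [MeasureTheory.ae_iff]
  exact hμ.2.1

lemma integrable_of_cont {E : Type*} [NormedAddCommGroup E] {μ : Measure (Mat n)}
    (hμ : IsHaarSO n μ) {F : Mat n → E} (hF : Continuous F) : Integrable F μ := by
  haveI : IsProbabilityMeasure μ := hμ.1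
  obtain ⟨W0, -, hW0⟩ := (isCompact_closedBall (0 : Mat n) 1).exists_isMaxOn
    ⟨0, by simp⟩ hF.norm.continuousOn
  refine (integrable_const ‖F W0‖).mono' hF.aestronglyMeasurable ?_
  filter_upwards [ae_mem_SO hμ] with Z hZ
  exact hW0 (by simpa [Metric.mem_closedBall, dist_zero_right] using SO_norm_le_one hZ)

/-- Evaluation of the `(i,j)` entry as a continuous linear map. -/
def entryCLM (i j : Fin n) : Mat n →L[ℝ] ℝ :=
  LinearMap.mkContinuous
    { toFun := fun Z : Mat n => Z i j
      map_add' := fun _ _ => rfl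
      map_smul' := fun _ _ => rfl } 1
    (fun Z => by rw [one_mul]; exact Matrix.norm_entry_le_entrywise_sup_norm Z)

lemma fderiv_mul_std (f : Mat n → ℝ) (Z : Mat n) (i j : Fin n) :
    fderiv ℝ f Z (Z * Matrix.single i j 1) = ((grad f Z)ᵀ * Z) j i := by
  have hrepr : Z * Matrix.single i j (1:ℝ) = ∑ a, Z a i • Matrix.single a j 1 := by
    ext a b
    simp [Matrix.mul_apply, Matrix.single, Matrix.sum_apply, mul_ite, ite_and,
      Finset.sum_ite_eq, Finset.sum_ite_eq']
  rw [hrepr, map_sum]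
  simp only [_root_.map_smul, smul_eq_mul, Matrix.mul_apply, Matrix.transpose_apply, grad,
    Matrix.of_apply]
  exact Finset.sum_congr rfl fun a _ => mul_comm _ _

lemma skew_entry (f : Mat n → ℝ) (Z : Mat n) (i j : Fin n) :
    skewPart ((grad f Z)ᵀ * Z) i j = -(2⁻¹ * fderiv ℝ f Z (Z * Kmat i j)) := by
  rw [Kmat, mul_sub, map_sub, fderiv_mul_std, fderiv_mul_std]
  simp only [skewPart, Matrix.smul_apply, Matrix.sub_apply, Matrix.transpose_apply,
    smul_eq_mul]
  ring

lemma key_integral {μ : Measure (Mat n)} (hμ : IsHaarSO n μ)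
    {f : Mat n → ℝ} (hf : ContDiff ℝ 1 f) (i j : Fin n) :
    ∫ Z, fderiv ℝ f Z (Z * Kmat i j) ∂μ = 0 := by
  by_cases hij : i = j
  · subst hij
    have hK : Kmat i i = 0 := sub_self _
    simp [hK]
  haveI : IsProbabilityMeasure μ := hμ.1
  have hcont_fderiv : Continuous (fun W => fderiv ℝ f W) := hf.continuous_fderiv one_ne_zero
  obtain ⟨W1, -, hM⟩ := (isCompact_closedBall (0 : Mat n) 1).exists_isMaxOn
    ⟨0, by simp⟩ ((hcont_fderiv.norm).continuousOn)
  set M : ℝ := ‖fderiv ℝ f W1‖ with hMdef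
  set S := Smat i j
  set K := Kmat i j
  set F' : ℝ → Mat n → ℝ := fun t Z =>
    fderiv ℝ f (Z * Rrot i j t) ((-Real.sin t) • (Z * S) + Real.cos t • (Z * K)) with hF'
  -- pointwise derivative
  have h_diff : ∀ (Z : Mat n) (t : ℝ),
      HasDerivAt (fun s => f (Z * Rrot i j s)) (F' t Z) t := by
    intro Z t
    have hcurve : (fun s => Z * Rrot i j s) =
        fun s => Z + ((Real.cos s - 1) • (Z * S) + Real.sin s • (Z * K)) := by
      funext s
      simp only [Rrot, mul_add, Matrix.mul_smul, mul_one]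
      abel
    have hin : HasDerivAt (fun s => Z * Rrot i j s)
        ((-Real.sin t) • (Z * S) + Real.cos t • (Z * K)) t := by
      rw [hcurve]
      have h1 : HasDerivAt (fun s : ℝ => (Real.cos s - 1) • (Z * S))
          ((-Real.sin t) • (Z * S)) t :=
        ((Real.hasDerivAt_cos t).sub_const 1).smul_const (Z * S)
      have h2 : HasDerivAt (fun s : ℝ => Real.sin s • (Z * K))
          (Real.cos t • (Z * K)) t := (Real.hasDerivAt_sin t).smul_const (Z * K)
      have := (hasDerivAt_const t Z).add (h1.add h2)
      rw [zero_add] at this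
      exact this
    exact ((hf.differentiable one_ne_zero (Z * Rrot i j t)).hasFDerivAt).comp_hasDerivAt t hin
  -- dominated derivative
  have key := hasDerivAt_integral_of_dominated_loc_of_deriv_le (μ := μ)
    (F := fun t Z => f (Z * Rrot i j t)) (F' := F') (x₀ := (0:ℝ))
    (bound := fun _ => M * ((n : ℝ) * ‖S‖ + (n : ℝ) * ‖K‖)) (s := Metric.ball (0:ℝ) 1) (Metric.ball_mem_nhds _ one_pos)
    (Filter.Eventually.of_forall fun t =>
      (hf.continuous.comp (continuous_id.matrix_mul continuous_const)).aestronglyMeasurable)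
    (by
      have h : ((fun (t : ℝ) (Z : Mat n) => f (Z * Rrot i j t)) 0) = f := by
        funext Z
        show f (Z * Rrot i j 0) = f Z
        rw [R_zero, mul_one]
      rw [show (fun Z => f (Z * Rrot i j 0)) = f from h]
      exact integrable_of_cont hμ hf.continuous)
    (by
      apply Continuous.aestronglyMeasurable
      exact (hcont_fderiv.comp (continuous_id.matrix_mul continuous_const)).clm_apply
        (by
          have hc : Continuous fun Z : Mat n => (-Real.sin 0) • (Z * S) + Real.cos 0 • (Z * K) := by
            fun_prop
          exact hc))
    (by
      filter_upwards [ae_mem_SO hμ] with Z hZ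
      intro t _
      have hZR : Z * Rrot i j t ∈ SO n := SO_mul hZ (R_mem_SO hij t)
      have hZ1 : ‖Z‖ ≤ 1 := SO_norm_le_one hZ
      have hop : ‖fderiv ℝ f (Z * Rrot i j t)‖ ≤ M :=
        hM (by simpa [Metric.mem_closedBall, dist_zero_right] using SO_norm_le_one hZR)
      have hZS : ‖Z * S‖ ≤ (n : ℝ) * ‖S‖ := by
        calc ‖Z * S‖ ≤ (n : ℝ) * ‖Z‖ * ‖S‖ := matNorm_mul_le Z S
          _ ≤ (n : ℝ) * 1 * ‖S‖ := by
              gcongr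
          _ = (n : ℝ) * ‖S‖ := by ring
      have hZK : ‖Z * K‖ ≤ (n : ℝ) * ‖K‖ := by
        calc ‖Z * K‖ ≤ (n : ℝ) * ‖Z‖ * ‖K‖ := matNorm_mul_le Z K
          _ ≤ (n : ℝ) * 1 * ‖K‖ := by gcongr
          _ = (n : ℝ) * ‖K‖ := by ring
      have hv : ‖(-Real.sin t) • (Z * S) + Real.cos t • (Z * K)‖ ≤
          (n : ℝ) * ‖S‖ + (n : ℝ) * ‖K‖ := by
        calc ‖(-Real.sin t) • (Z * S) + Real.cos t • (Z * K)‖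
            ≤ ‖(-Real.sin t) • (Z * S)‖ + ‖Real.cos t • (Z * K)‖ := norm_add_le _ _
          _ = |Real.sin t| * ‖Z * S‖ + |Real.cos t| * ‖Z * K‖ := by
              rw [norm_smul, norm_smul]
              simp [Real.norm_eq_abs]
          _ ≤ 1 * ((n : ℝ) * ‖S‖) + 1 * ((n : ℝ) * ‖K‖) := by
              have h1 := Real.abs_sin_le_one t
              have h2 := Real.abs_cos_le_one t
              gcongr
          _ = (n : ℝ) * ‖S‖ + (n : ℝ) * ‖K‖ := by ring
      calc ‖F' t Z‖ ≤ ‖fderiv ℝ f (Z * Rrot i j t)‖ *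
            ‖(-Real.sin t) • (Z * S) + Real.cos t • (Z * K)‖ :=
            ContinuousLinearMap.le_opNorm _ _
        _ ≤ M * ((n : ℝ) * ‖S‖ + (n : ℝ) * ‖K‖) := by
            apply mul_le_mul hop hv (norm_nonneg _)
            exact le_trans (norm_nonneg _) hop)
    (integrable_const _)
    (by
      filter_upwards with Z
      intro t _
      exact h_diff Z t)
  -- the integral is constant in t
  have hu : (fun t => ∫ Z, f (Z * Rrot i j t) ∂μ) = fun _ => ∫ Z, f Z ∂μ := by
    funext t
    have hmeas : Measurable fun Z : Mat n => Z * Rrot i j t :=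
      (continuous_id.matrix_mul continuous_const).measurable
    conv_rhs => rw [← hμ.2.2.2 (Rrot i j t) (R_mem_SO hij t)]
    rw [integral_map hmeas.aemeasurable (show Continuous f from hf.continuous).aestronglyMeasurable]
  have hzero : HasDerivAt (fun t => ∫ Z, f (Z * Rrot i j t) ∂μ) 0 0 := by
    rw [hu]; exact hasDerivAt_const _ _
  have hmain : ∫ Z, F' 0 Z ∂μ = 0 := key.2.unique hzero
  have hF'0 : (fun Z : Mat n => F' 0 Z) = fun Z => fderiv ℝ f Z (Z * K) := by
    funext Z
    rw [hF']
    simp [R_zero, mul_one]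
  rwa [hF'0] at hmain

lemma skew_cont {f : Mat n → ℝ} (hf : ContDiff ℝ 1 f) :
    Continuous fun Z : Mat n => skewPart ((grad f Z)ᵀ * Z) := by
  have hgrad : Continuous fun Z : Mat n => grad f Z := by
    apply continuous_matrix
    intro a b
    exact (hf.continuous_fderiv one_ne_zero).clm_apply continuous_const
  have hmul : Continuous fun Z : Mat n => (grad f Z)ᵀ * Z :=
    (hgrad.matrix_transpose).matrix_mul continuous_id
  exact (hmul.sub hmul.matrix_transpose).const_smul (2:ℝ)⁻¹

theorem stmt1 {n : ℕ} (hn : 1 ≤ n) (μ : Measure (Matrix (Fin n) (Fin n) ℝ))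
    (hμ : IsHaarSO n μ) (f : Matrix (Fin n) (Fin n) ℝ → ℝ) (hf : ContDiff ℝ 1 f) :
    (∫ Z, skewPart ((grad f Z)ᵀ * Z) ∂μ = 0) ∧
    ((∀ Z, 0 < f Z) → (∫ Z, f Z ∂μ = 1) → ∫ Z, f Z • scoreG f Z ∂μ = 0) := by
  have hint := integrable_of_cont (E := Mat n) hμ (skew_cont hf)
  have h1 : ∫ Z, skewPart ((grad f Z)ᵀ * Z) ∂μ = 0 := by
    apply Matrix.ext
    intro i j
    have hcomm := (entryCLM i j).integral_comp_comm hint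
    have hentry : (∫ Z, skewPart ((grad f Z)ᵀ * Z) ∂μ) i j
        = ∫ Z, skewPart ((grad f Z)ᵀ * Z) i j ∂μ := hcomm.symm
    rw [hentry]
    have : (fun Z : Mat n => skewPart ((grad f Z)ᵀ * Z) i j)
        = fun Z => -(2⁻¹ * fderiv ℝ f Z (Z * Kmat i j)) := by
      funext Z; exact skew_entry f Z i j
    rw [this]
    rw [integral_neg, MeasureTheory.integral_const_mul, key_integral hμ hf i j]
    simp
  refine ⟨h1, fun hpos _ => ?_⟩
  have heq : (fun Z => f Z • scoreG f Z)
      = fun Z : Mat n => skewPart ((grad f Z)ᵀ * Z) := by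
    funext Z
    rw [scoreG, smul_smul, mul_inv_cancel₀ (hpos Z).ne', one_smul]
  rw [heq, h1]
end
end

section
/- Let n ≥ 2 and let i, j, k, ℓ ∈ {1,…,n} with i ≠ j, k ≠ ℓ and {i,j} ≠ {k,ℓ}. Let E be the n×n matrix with E_{ij} = 1, E_{ji} = −1 and all other entries zero, and let E' be the n×n matrix with E'_{kℓ} = 1, E'_{ℓk} = −1 and all other entries zero. Then there exists a signed permutation matrix P ∈ O(n) (an orthogonal matrix each of whose entries is 0, 1 or −1, with exactly one nonzero entry in each row and column) such that PᵀEP = E' and PᵀE'P = −E. -/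
open Matrix

/-- The orthogonal group `O(n)`, as a set of `n × n` real matrices. -/
def ON (n : ℕ) : Set (Matrix (Fin n) (Fin n) ℝ) :=
  {A | A * Aᵀ = 1}

/-- A signed permutation matrix: an orthogonal matrix each of whose entries is `0`, `1`
or `-1`, with exactly one nonzero entry in each row and in each column. -/
def IsSignedPerm {n : ℕ} (P : Matrix (Fin n) (Fin n) ℝ) : Prop :=
  P ∈ ON n ∧ (∀ i j, P i j = 0 ∨ P i j = 1 ∨ P i j = -1) ∧
    (∀ i, ∃! j, P i j ≠ 0) ∧ (∀ j, ∃! i, P i j ≠ 0)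

lemma key {n : ℕ} (σ : Equiv.Perm (Fin n)) (ε : Fin n → ℝ) (i j : Fin n) :
    (Matrix.of fun a b => if σ a = b then ε a else 0)ᵀ *
      Matrix.single i j (1:ℝ) * (Matrix.of fun a b => if σ a = b then ε a else 0)
      = (ε i * ε j) • Matrix.single (σ i) (σ j) 1 := by
  ext a b
  simp only [Matrix.mul_apply, Matrix.single, Matrix.transpose_apply, Matrix.of_apply,
    Matrix.smul_apply, smul_eq_mul, ite_and]
  rw [Finset.sum_eq_single j ?h1 ?h2]
  · split_ifs <;> simp_all
  case h1 => intro c _ hc; simp [Ne.symm hc]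
  case h2 => simp

lemma key2 {n : ℕ} (σ : Equiv.Perm (Fin n)) (ε : Fin n → ℝ) (i j : Fin n) :
    (Matrix.of fun a b => if σ a = b then ε a else 0)ᵀ *
      (Matrix.single i j (1:ℝ) - Matrix.single j i 1) *
      (Matrix.of fun a b => if σ a = b then ε a else 0)
      = (ε i * ε j) •
        (Matrix.single (σ i) (σ j) (1:ℝ) - Matrix.single (σ j) (σ i) 1) := by
  rw [mul_sub, sub_mul, key, key, smul_sub, mul_comm (ε j) (ε i)]

lemma sp {n : ℕ} (σ : Equiv.Perm (Fin n)) (ε : Fin n → ℝ)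
    (hε : ∀ a, ε a = 1 ∨ ε a = -1) :
    IsSignedPerm (Matrix.of fun a b => if σ a = b then ε a else 0) := by
  have hε0 : ∀ a, ε a ≠ 0 := by intro a; rcases hε a with h | h <;> rw [h] <;> norm_num
  refine ⟨?_, ?_, ?_, ?_⟩
  · show _ = (1 : Matrix (Fin n) (Fin n) ℝ)
    ext a b
    simp only [Matrix.mul_apply, Matrix.transpose_apply, Matrix.of_apply, Matrix.one_apply]
    rw [Finset.sum_eq_single (σ a) (by intro c _ hc; simp [Ne.symm hc]) (by simp)]
    by_cases hab : a = b
    · subst hab; rcases hε a with h | h <;> simp [h]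
    · have h2 : σ a ≠ σ b := σ.injective.ne_iff.mpr hab
      simp [hab, Ne.symm h2]
  · intro a b
    rcases hε a with h | h <;> by_cases hb : σ a = b <;> simp [hb, h]
  · intro a
    exact ⟨σ a, by simp [hε0],
      fun c hc => by by_contra h; exact hc (if_neg (fun hh : σ a = c => h hh.symm))⟩
  · intro b
    refine ⟨σ.symm b, by simp [hε0], fun c hc => ?_⟩
    have h : σ c = b := by by_contra hh; exact hc (if_neg hh)
    rw [← h]; simp

lemma build {n : ℕ} (σ : Equiv.Perm (Fin n)) (ε : Fin n → ℝ)
    (hε : ∀ a, ε a = 1 ∨ ε a = -1) (i j k l : Fin n)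
    (hA : (ε i * ε j) •
        (Matrix.single (σ i) (σ j) (1:ℝ) - Matrix.single (σ j) (σ i) 1)
        = Matrix.single k l 1 - Matrix.single l k 1)
    (hB : (ε k * ε l) •
        (Matrix.single (σ k) (σ l) (1:ℝ) - Matrix.single (σ l) (σ k) 1)
        = -(Matrix.single i j 1 - Matrix.single j i 1)) :
    ∃ P : Matrix (Fin n) (Fin n) ℝ, IsSignedPerm P ∧
      Pᵀ * (Matrix.single i j (1 : ℝ) - Matrix.single j i 1) * P =
        Matrix.single k l 1 - Matrix.single l k 1 ∧
      Pᵀ * (Matrix.single k l (1 : ℝ) - Matrix.single l k 1) * P =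
        -(Matrix.single i j 1 - Matrix.single j i 1) :=
  ⟨_, sp σ ε hε, by rw [key2, hA], by rw [key2, hB]⟩

theorem stmt2 {n : ℕ} (hn : 2 ≤ n) (i j k l : Fin n) (hij : i ≠ j) (hkl : k ≠ l)
    (hne : ({i, j} : Finset (Fin n)) ≠ ({k, l} : Finset (Fin n))) :
    ∃ P : Matrix (Fin n) (Fin n) ℝ, IsSignedPerm P ∧
      Pᵀ * (Matrix.single i j (1 : ℝ) - Matrix.single j i 1) * P =
        Matrix.single k l 1 - Matrix.single l k 1 ∧
      Pᵀ * (Matrix.single k l (1 : ℝ) - Matrix.single l k 1) * P =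
        -(Matrix.single i j 1 - Matrix.single j i 1) := by
  by_cases h1 : i = k
  · -- i = k, j ≠ l
    subst h1
    have hjl : j ≠ l := by rintro rfl; exact hne rfl
    have hil : i ≠ l := hkl
    refine build (Equiv.swap j l) (fun a => if a = l then -1 else 1)
      (fun a => by by_cases h : a = l <;> simp [h]) i j i l ?_ ?_ <;>
    · simp [Equiv.swap_apply_of_ne_of_ne, Equiv.swap_apply_left, Equiv.swap_apply_right,
        hij, hjl, hil, Ne.symm hij, Ne.symm hjl, Ne.symm hil, neg_sub]
  by_cases h2 : i = l
  · -- i = l, j ≠ k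
    subst h2
    have hki : k ≠ i := hkl
    have hjk : j ≠ k := by rintro rfl; exact hne (Finset.pair_comm i j)
    refine build (Equiv.swap j k) (fun a => if a = j then -1 else 1)
      (fun a => by by_cases h : a = j <;> simp [h]) i j k i ?_ ?_ <;>
    · simp [Equiv.swap_apply_of_ne_of_ne, Equiv.swap_apply_left, Equiv.swap_apply_right,
        hij, hjk, hki, Ne.symm hij, Ne.symm hjk, Ne.symm hki, neg_sub]
  by_cases h3 : j = k
  · -- j = k, i ≠ l
    subst h3
    have hjl : j ≠ l := hkl
    have hil : i ≠ l := h2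
    refine build (Equiv.swap i l) (fun a => if a = i then -1 else 1)
      (fun a => by by_cases h : a = i <;> simp [h]) i j j l ?_ ?_ <;>
    · simp [Equiv.swap_apply_of_ne_of_ne, Equiv.swap_apply_left, Equiv.swap_apply_right,
        hij, hjl, hil, Ne.symm hij, Ne.symm hjl, Ne.symm hil, neg_sub]
  by_cases h4 : j = l
  · -- j = l, i ≠ k
    subst h4
    have hik : i ≠ k := h1
    have hkj : k ≠ j := hkl
    refine build (Equiv.swap i k) (fun a => if a = k then -1 else 1)
      (fun a => by by_cases h : a = k <;> simp [h]) i j k j ?_ ?_ <;>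
    · simp [Equiv.swap_apply_of_ne_of_ne, Equiv.swap_apply_left, Equiv.swap_apply_right,
        hij, hik, hkj, Ne.symm hij, Ne.symm hik, Ne.symm hkj, neg_sub]
  · -- all distinct
    have hik : i ≠ k := h1
    have hil : i ≠ l := h2
    have hjk : j ≠ k := h3
    have hjl : j ≠ l := h4
    refine build ((Equiv.swap i k).trans (Equiv.swap j l)) (fun a => if a = l then -1 else 1)
      (fun a => by by_cases h : a = l <;> simp [h]) i j k l ?_ ?_ <;>
    · simp [Equiv.trans_apply, Equiv.swap_apply_of_ne_of_ne, Equiv.swap_apply_left,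
        Equiv.swap_apply_right, hij, hkl, hik, hil, hjk, hjl,
        Ne.symm hij, Ne.symm hkl, Ne.symm hik, Ne.symm hil, Ne.symm hjk, Ne.symm hjl, neg_sub]
end

section
/- Let n ≥ 2. Let f̃ : ℝ^{n×n} → ℝ be continuously differentiable, positive, and spectral (f̃(QZQᵀ) = f̃(Z) for every Q ∈ O(n) and every Z ∈ ℝ^{n×n}), with ∫_{SO(n)} f̃ dμ = 1. Fix R ∈ SO(n) and the score map G(Z) = (1/f̃(Z))·skew((∇f̃(Z))ᵀZ). For 1 ≤ p < q ≤ n define h_{pq}(Z) = ⟨G(Z), R·E_{pq}·Rᵀ⟩, where E_{pq} is the n×n matrix with (p,q) entry 1/√2, (q,p) entry −1/√2 and zeros elsewhere. Then for any two distinct index pairs (p,q) ≠ (r,s) (p<q, r<s): ∫_{SO(n)} h_{pq}(Z) dμ-mean vanishes, i.e. ∫ h_{pq}(Z) f̃(Z) dμ(Z) = 0, and h_{pq}, h_{rs} are uncorrelated: ∫_{SO(n)} h_{pq}(Z)·h_{rs}(Z)·f̃(Z) dμ(Z) = 0. -/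
open Matrix MeasureTheory Real

noncomputable section

attribute [local instance] Matrix.normedAddCommGroup Matrix.normedSpace

/-- The Frobenius inner product `⟨A, B⟩ = trace(Aᵀ B)`. -/
def frobInner {n : ℕ} (A B : Matrix (Fin n) (Fin n) ℝ) : ℝ :=
  (Aᵀ * B).trace

/-- The elementary skew-symmetric matrix `E_{pq}` with `(p,q)` entry `1/√2`, `(q,p)` entry
`-1/√2` and zeros elsewhere. -/
def Ebasis {n : ℕ} (p q : Fin n) : Matrix (Fin n) (Fin n) ℝ :=
  (Real.sqrt 2)⁻¹ • (Matrix.single p q 1 - Matrix.single q p 1)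

/-- `h_{pq}(Z) = ⟨G(Z), R · E_{pq} · Rᵀ⟩`. -/
def hFun {n : ℕ} (f : Matrix (Fin n) (Fin n) ℝ → ℝ) (R : Matrix (Fin n) (Fin n) ℝ)
    (p q : Fin n) (Z : Matrix (Fin n) (Fin n) ℝ) : ℝ :=
  frobInner (scoreG f Z) (R * Ebasis p q * Rᵀ)

instance matBorel {n : ℕ} : BorelSpace (Matrix (Fin n) (Fin n) ℝ) := Pi.borelSpace
section Meas

variable {n : ℕ}

local notation "Mat" => Matrix (Fin n) (Fin n) ℝ

lemma measurable_entry (i j : Fin n) : Measurable fun Z : Mat => Z i j :=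
  (measurable_pi_apply j).comp (measurable_pi_apply i)

lemma measurable_mulLeft (g : Mat) : Measurable fun Z : Mat => g * Z := by
  refine measurable_pi_lambda _ fun i => measurable_pi_lambda _ fun j => ?_
  simp only [Matrix.mul_apply]
  exact Finset.measurable_sum _ fun k _ => (measurable_entry k j).const_mul _

lemma measurable_mulRight (g : Mat) : Measurable fun Z : Mat => Z * g := by
  refine measurable_pi_lambda _ fun i => measurable_pi_lambda _ fun j => ?_
  simp only [Matrix.mul_apply]
  exact Finset.measurable_sum _ fun k _ => (measurable_entry i k).mul_const _

lemma measurable_conj (g : Mat) : Measurable fun Z : Mat => g * Z * gᵀ :=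
  (measurable_mulRight gᵀ).comp (measurable_mulLeft g)

lemma measurable_mul2 : Measurable fun P : Mat × Mat => P.1 * P.2 := by
  refine measurable_pi_lambda _ fun i => measurable_pi_lambda _ fun j => ?_
  simp only [Matrix.mul_apply]
  exact Finset.measurable_sum _ fun k _ =>
    (Measurable.mul (f := fun c : Mat × Mat => c.1 i k) (g := fun c : Mat × Mat => c.2 k j)
      ((measurable_pi_apply k).comp ((measurable_pi_apply i).comp measurable_fst))
      ((measurable_pi_apply j).comp ((measurable_pi_apply k).comp measurable_snd)))

lemma measurableSet_SO : MeasurableSet (SO n) := by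
  have h1 : MeasurableSet {A : Mat | A * Aᵀ = 1} := by
    have : {A : Mat | A * Aᵀ = 1} = ⋂ i, ⋂ j, {A : Mat | (A * Aᵀ) i j = (1 : Mat) i j} := by
      ext A
      simp [Set.mem_iInter, ← Matrix.ext_iff]
    rw [this]
    refine MeasurableSet.iInter fun i => MeasurableSet.iInter fun j => ?_
    have hm : Measurable fun A : Mat => (A * Aᵀ) i j := by
      simp only [Matrix.mul_apply, Matrix.transpose_apply]
      exact Finset.measurable_sum _ fun k _ => (measurable_entry i k).mul (measurable_entry j k)
    exact hm (measurableSet_singleton _)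
  have h2 : MeasurableSet {A : Mat | A.det = 1} := by
    have hm : Measurable fun A : Mat => A.det := by
      simp only [Matrix.det_apply']
      exact Finset.measurable_sum _ fun σ _ =>
        (Finset.measurable_prod _ fun k _ => measurable_entry (σ k) k).const_mul _
    exact hm (measurableSet_singleton _)
  exact h1.inter h2

end Meas
open scoped ENNReal
section Haar

variable {n : ℕ}

local notation "Mat" => Matrix (Fin n) (Fin n) ℝ

lemma haar_unique (μ ν : Measure Mat) [IsProbabilityMeasure μ] [IsProbabilityMeasure ν]
    (hμSO : μ (SO n)ᶜ = 0) (hνSO : ν (SO n)ᶜ = 0)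
    (hμr : ∀ g ∈ SO n, Measure.map (fun Z => Z * g) μ = μ)
    (hνl : ∀ g ∈ SO n, Measure.map (fun Z => g * Z) ν = ν) : ν = μ := by
  ext s hs
  have hμae : ∀ᵐ x ∂μ, x ∈ SO n := by
    rw [MeasureTheory.ae_iff]
    exact hμSO
  have hνae : ∀ᵐ y ∂ν, y ∈ SO n := by
    rw [MeasureTheory.ae_iff]
    exact hνSO
  set F : Mat → Mat → ℝ≥0∞ := fun x y => s.indicator (fun _ => 1) (x * y) with hF
  have hFmeas : Measurable (Function.uncurry F) := by
    have : Function.uncurry F = (s.indicator (fun _ => 1)) ∘ (fun P : Mat × Mat => P.1 * P.2) := rfl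
    rw [this]
    exact (measurable_const.indicator hs).comp measurable_mul2
  -- inner over y: for x in SO n, ∫⁻ y, F x y ∂ν = ν s
  have h1 : ∀ x ∈ SO n, ∫⁻ y, F x y ∂ν = ν s := by
    intro x hx
    have hmap := hνl x hx
    calc ∫⁻ y, F x y ∂ν = ∫⁻ y, s.indicator (fun _ => 1) ((fun Z => x * Z) y) ∂ν := rfl
      _ = ∫⁻ y, s.indicator (fun _ => 1) y ∂(Measure.map (fun Z => x * Z) ν) :=
          (MeasureTheory.lintegral_map (measurable_const.indicator hs)
            (measurable_mulLeft x)).symm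
      _ = ∫⁻ y, s.indicator (fun _ => 1) y ∂ν := by rw [hmap]
      _ = ν s := by simp [MeasureTheory.lintegral_indicator hs]
  have h2 : ∀ y ∈ SO n, ∫⁻ x, F x y ∂μ = μ s := by
    intro y hy
    have hmap := hμr y hy
    calc ∫⁻ x, F x y ∂μ = ∫⁻ x, s.indicator (fun _ => 1) ((fun Z => Z * y) x) ∂μ := rfl
      _ = ∫⁻ x, s.indicator (fun _ => 1) x ∂(Measure.map (fun Z => Z * y) μ) :=
          (MeasureTheory.lintegral_map (measurable_const.indicator hs)
            (measurable_mulRight y)).symm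
      _ = ∫⁻ x, s.indicator (fun _ => 1) x ∂μ := by rw [hmap]
      _ = μ s := by simp [MeasureTheory.lintegral_indicator hs]
  have key : ∫⁻ x, ∫⁻ y, F x y ∂ν ∂μ = ∫⁻ y, ∫⁻ x, F x y ∂μ ∂ν :=
    MeasureTheory.lintegral_lintegral_swap hFmeas.aemeasurable
  have lhs : ∫⁻ x, ∫⁻ y, F x y ∂ν ∂μ = ν s := by
    rw [MeasureTheory.lintegral_congr_ae (hμae.mono fun x hx => h1 x hx)]
    simp
  have rhs : ∫⁻ y, ∫⁻ x, F x y ∂μ ∂ν = μ s := by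
    rw [MeasureTheory.lintegral_congr_ae (hνae.mono fun y hy => h2 y hy)]
    simp
  rw [← lhs, key, rhs]

end Haar
section Conj

variable {n : ℕ}

local notation "Mat" => Matrix (Fin n) (Fin n) ℝ

lemma ON_tr_mul {Q : Mat} (hQ : Q ∈ ON n) : Qᵀ * Q = 1 := by
  have := hQ
  simp only [ON, Set.mem_setOf_eq] at this
  rw [mul_eq_one_comm] at this
  exact this

lemma conj_mem_SO {Q g : Mat} (hQ : Q ∈ ON n) (hg : g ∈ SO n) : Qᵀ * g * Q ∈ SO n := by
  obtain ⟨hg1, hg2⟩ := hg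
  have hQ1 : Q * Qᵀ = 1 := hQ
  have hQ2 : Qᵀ * Q = 1 := ON_tr_mul hQ
  constructor
  · calc (Qᵀ * g * Q) * (Qᵀ * g * Q)ᵀ = Qᵀ * g * (Q * Qᵀ) * gᵀ * Q := by
          simp only [Matrix.transpose_mul, Matrix.transpose_transpose]; noncomm_ring
    _ = Qᵀ * (g * gᵀ) * Q := by rw [hQ1]; noncomm_ring
    _ = 1 := by rw [hg1, Matrix.mul_one, hQ2]
  · have : (Qᵀ * g * Q).det = Qᵀ.det * g.det * Q.det := by rw [Matrix.det_mul, Matrix.det_mul]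
    rw [this, hg2, Matrix.det_transpose]
    have : Q.det * Q.det = 1 := by
      have := congrArg Matrix.det hQ1
      rwa [Matrix.det_mul, Matrix.det_transpose, Matrix.det_one] at this
    rw [mul_one]
    exact this

lemma conj_mem_SO' {Q g : Mat} (hQ : Q ∈ ON n) (hg : g ∈ SO n) : Q * g * Qᵀ ∈ SO n := by
  have hQ' : Qᵀ ∈ ON n := by
    have : Qᵀ * Qᵀᵀ = 1 := by rw [Matrix.transpose_transpose]; exact ON_tr_mul hQ
    exact this
  have := conj_mem_SO hQ' hg
  rwa [Matrix.transpose_transpose] at this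

lemma conj_map_eq {μ : Measure Mat} (hμ : IsHaarSO n μ) {Q : Mat} (hQ : Q ∈ ON n) :
    Measure.map (fun Z => Q * Z * Qᵀ) μ = μ := by
  obtain ⟨hprob, hSO, hleft, hright⟩ := hμ
  haveI := hprob
  set c : Mat → Mat := fun Z => Q * Z * Qᵀ with hc
  have hcm : Measurable c := measurable_conj Q
  haveI : IsProbabilityMeasure (Measure.map c μ) := MeasureTheory.Measure.isProbabilityMeasure_map hcm.aemeasurable
  refine haar_unique μ (Measure.map c μ) hSO ?_ hright ?_
  · rw [Measure.map_apply hcm measurableSet_SO.compl]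
    refine measure_mono_null ?_ hSO
    intro Z hZ
    simp only [Set.mem_preimage, Set.mem_compl_iff] at hZ ⊢
    intro hmem
    exact hZ (conj_mem_SO' hQ hmem)
  · intro g hg
    rw [Measure.map_map (measurable_mulLeft g) hcm]
    have hfun : (fun Z => g * Z) ∘ c = c ∘ (fun Z => (Qᵀ * g * Q) * Z) := by
      funext Z
      simp only [Function.comp_apply, hc]
      have hQ1 : Q * Qᵀ = 1 := hQ
      calc g * (Q * Z * Qᵀ) = (Q * Qᵀ) * g * (Q * Z * Qᵀ) := by rw [hQ1, Matrix.one_mul]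
        _ = Q * (Qᵀ * g * Q * Z) * Qᵀ := by noncomm_ring
    rw [hfun, ← Measure.map_map hcm (measurable_mulLeft _), hleft _ (conj_mem_SO hQ hg)]

end Conj
section Analysis

variable {n : ℕ}

local notation "Mat" => Matrix (Fin n) (Fin n) ℝ

lemma fderiv_matrix_apply (f : Mat → ℝ) (Z A : Mat) :
    fderiv ℝ f Z A = ∑ i, ∑ j, A i j * grad f Z i j := by
  conv_lhs => rw [Matrix.matrix_eq_sum_single A]
  rw [map_sum]
  refine Finset.sum_congr rfl fun i _ => ?_
  rw [map_sum]
  refine Finset.sum_congr rfl fun j _ => ?_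
  have : Matrix.single i j (A i j) = (A i j) • Matrix.single i j (1 : ℝ) := by
    rw [Matrix.smul_single, smul_eq_mul, mul_one]
  rw [this, _root_.map_smul, smul_eq_mul]
  rfl

/-- conjugation as a continuous linear map -/
def conjCLM (Q : Mat) : Mat →L[ℝ] Mat :=
  LinearMap.toContinuousLinearMap
    { toFun := fun H => Q * H * Qᵀ
      map_add' := fun A B => by noncomm_ring
      map_smul' := fun c A => by
        simp only [RingHom.id_apply, Matrix.smul_mul, Matrix.mul_smul] }

lemma fderiv_conj (f : Mat → ℝ) (hf : ContDiff ℝ 1 f) {Q : Mat}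
    (hspecQ : ∀ Z, f (Q * Z * Qᵀ) = f Z) (Z H : Mat) :
    fderiv ℝ f Z H = fderiv ℝ f (Q * Z * Qᵀ) (Q * H * Qᵀ) := by
  have hdZ : DifferentiableAt ℝ f Z := (hf.differentiable one_ne_zero) Z
  have hdc : DifferentiableAt ℝ f (Q * Z * Qᵀ) := (hf.differentiable one_ne_zero) _
  have hL : HasFDerivAt (fun W : Mat => Q * W * Qᵀ) (conjCLM Q) Z :=
    (conjCLM Q).hasFDerivAt
  have hcomp : HasFDerivAt (f ∘ fun W : Mat => Q * W * Qᵀ)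
      ((fderiv ℝ f (Q * Z * Qᵀ)).comp (conjCLM Q)) Z := hdc.hasFDerivAt.comp Z hL
  have hfun : f ∘ (fun W : Mat => Q * W * Qᵀ) = f := funext fun W => hspecQ W
  rw [hfun] at hcomp
  have huniq := hdZ.hasFDerivAt.unique hcomp
  rw [huniq]
  rfl

lemma grad_conj (f : Mat → ℝ) (hf : ContDiff ℝ 1 f) {Q : Mat} (hQ : Q ∈ ON n)
    (hspecQ : ∀ Z, f (Q * Z * Qᵀ) = f Z) (Z : Mat) :
    grad f (Q * Z * Qᵀ) = Q * grad f Z * Qᵀ := by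
  have hQ1 : Q * Qᵀ = 1 := hQ
  have hQ2 : Qᵀ * Q = 1 := ON_tr_mul hQ
  ext i j
  have e1 : Q * (Qᵀ * Matrix.single i j 1 * Q) * Qᵀ = Matrix.single i j 1 := by
    calc Q * (Qᵀ * Matrix.single i j 1 * Q) * Qᵀ
        = (Q * Qᵀ) * Matrix.single i j 1 * (Q * Qᵀ) := by noncomm_ring
      _ = Matrix.single i j 1 := by rw [hQ1, Matrix.one_mul, Matrix.mul_one]
  have e2 : grad f (Q * Z * Qᵀ) i j
      = fderiv ℝ f Z (Qᵀ * Matrix.single i j 1 * Q) := by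
    rw [fderiv_conj f hf hspecQ Z, e1]
    rfl
  have hentry : ∀ k l, (Qᵀ * Matrix.single i j (1:ℝ) * Q) k l = Qᵀ k i * Q j l := by
    intro k l
    simp [Matrix.mul_apply, Matrix.single, ite_and, Finset.sum_mul, Matrix.of_apply]
  rw [e2, fderiv_matrix_apply]
  have : (Q * grad f Z * Qᵀ) i j = ∑ k, ∑ l, Qᵀ k i * Q j l * grad f Z k l := by
    simp only [Matrix.mul_apply, Matrix.transpose_apply, Finset.sum_mul]
    rw [Finset.sum_comm]
    exact Finset.sum_congr rfl fun k _ => Finset.sum_congr rfl fun l _ => by ring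
  rw [this]
  exact Finset.sum_congr rfl fun k _ => Finset.sum_congr rfl fun l _ => by rw [hentry k l]

end Analysis
section Algebra

variable {n : ℕ}

local notation "Mat" => Matrix (Fin n) (Fin n) ℝ

lemma skewPart_conj (Q M : Mat) : skewPart (Q * M * Qᵀ) = Q * skewPart M * Qᵀ := by
  simp only [skewPart, Matrix.transpose_mul, Matrix.transpose_transpose,
    Matrix.smul_mul, Matrix.mul_smul]
  congr 1
  rw [Matrix.mul_sub, Matrix.sub_mul]
  simp [Matrix.mul_assoc]

lemma scoreG_conj (f : Mat → ℝ) (hf : ContDiff ℝ 1 f) {Q : Mat} (hQ : Q ∈ ON n)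
    (hspecQ : ∀ Z, f (Q * Z * Qᵀ) = f Z) (Z : Mat) :
    scoreG f (Q * Z * Qᵀ) = Q * scoreG f Z * Qᵀ := by
  rw [scoreG, scoreG, hspecQ, grad_conj f hf hQ hspecQ]
  have hQ2 : Qᵀ * Q = 1 := ON_tr_mul hQ
  have : (Q * grad f Z * Qᵀ)ᵀ * (Q * Z * Qᵀ) = Q * ((grad f Z)ᵀ * Z) * Qᵀ := by
    simp only [Matrix.transpose_mul, Matrix.transpose_transpose]
    calc Q * ((grad f Z)ᵀ * Qᵀ) * (Q * Z * Qᵀ)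
        = Q * (grad f Z)ᵀ * (Qᵀ * Q) * Z * Qᵀ := by noncomm_ring
      _ = Q * ((grad f Z)ᵀ * Z) * Qᵀ := by rw [hQ2]; noncomm_ring
  rw [this, skewPart_conj, Matrix.mul_smul, Matrix.smul_mul]

lemma frobInner_conj (Q A B : Mat) : frobInner (Q * A * Qᵀ) B = frobInner A (Qᵀ * B * Q) := by
  have h1 : (Q * A * Qᵀ)ᵀ * B = Q * (Aᵀ * (Qᵀ * B)) := by
    simp [Matrix.transpose_mul, Matrix.mul_assoc]
  rw [frobInner, h1, Matrix.trace_mul_comm, frobInner]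
  simp [Matrix.mul_assoc]

lemma frobInner_smul_right (c : ℝ) (A B : Mat) : frobInner A (c • B) = c * frobInner A B := by
  rw [frobInner, Matrix.mul_smul, Matrix.trace_smul, frobInner, smul_eq_mul]

def Dmat (t : Fin n) : Mat := Matrix.diagonal (fun i => if i = t then (-1 : ℝ) else 1)

lemma Dmat_transpose (t : Fin n) : (Dmat t)ᵀ = Dmat t := Matrix.diagonal_transpose _

lemma Dmat_mul_self (t : Fin n) : Dmat t * Dmat t = 1 := by
  rw [Dmat, Matrix.diagonal_mul_diagonal]
  convert Matrix.diagonal_one with i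
  split_ifs <;> norm_num

lemma diag_mul_std (d : Fin n → ℝ) (a b : Fin n) (c : ℝ) :
    Matrix.diagonal d * Matrix.single a b c = Matrix.single a b (d a * c) := by
  ext i j
  rw [Matrix.diagonal_mul]
  simp only [Matrix.single, Matrix.of_apply]
  split_ifs with h
  · rcases h with ⟨rfl, rfl⟩; rfl
  · ring

lemma std_mul_diag (d : Fin n → ℝ) (a b : Fin n) (c : ℝ) :
    Matrix.single a b c * Matrix.diagonal d = Matrix.single a b (c * d b) := by
  ext i j
  rw [Matrix.mul_diagonal]
  simp only [Matrix.single, Matrix.of_apply]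
  split_ifs with h
  · rcases h with ⟨rfl, rfl⟩; rfl
  · ring

lemma Dmat_conj_Ebasis (t a b : Fin n) :
    Dmat t * Ebasis a b * Dmat t
      = ((if a = t then (-1:ℝ) else 1) * (if b = t then (-1:ℝ) else 1)) • Ebasis a b := by
  set d : Fin n → ℝ := fun i => if i = t then (-1 : ℝ) else 1 with hd
  have : Dmat t * Ebasis a b * Dmat t
      = (Real.sqrt 2)⁻¹ • (Matrix.single a b (d a * d b)
        - Matrix.single b a (d b * d a)) := by
    rw [Ebasis, Matrix.mul_smul, Matrix.smul_mul, Dmat, Matrix.mul_sub, Matrix.sub_mul,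
      diag_mul_std, diag_mul_std, std_mul_diag, std_mul_diag]
    simp [hd, mul_one, one_mul]
  rw [this, Ebasis, smul_comm]
  congr 1
  rw [smul_sub, Matrix.smul_single, Matrix.smul_single]
  simp only [smul_eq_mul, mul_one]
  rw [mul_comm (d b) (d a)]

end Algebra
section Flip

variable {n : ℕ}

local notation "Mat" => Matrix (Fin n) (Fin n) ℝ

lemma Qflip_symm (R : Mat) (t : Fin n) : (R * Dmat t * Rᵀ)ᵀ = R * Dmat t * Rᵀ := by
  simp [Matrix.transpose_mul, Dmat_transpose, Matrix.mul_assoc]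

lemma Qflip_mem_ON {R : Mat} (hR : R ∈ SO n) (t : Fin n) : (R * Dmat t * Rᵀ) ∈ ON n := by
  have hRRt : R * Rᵀ = 1 := hR.1
  have hRtR : Rᵀ * R = 1 := mul_eq_one_comm.mp hRRt
  show (R * Dmat t * Rᵀ) * (R * Dmat t * Rᵀ)ᵀ = 1
  rw [Qflip_symm]
  have h : (R * Dmat t * Rᵀ) * (R * Dmat t * Rᵀ)
      = R * (Dmat t * (Rᵀ * R) * Dmat t) * Rᵀ := by noncomm_ring
  rw [h, hRtR, Matrix.mul_one, Dmat_mul_self, Matrix.mul_one, hRRt]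

lemma Qflip_conj_basis {R : Mat} (hR : R ∈ SO n) (t a b : Fin n) :
    (R * Dmat t * Rᵀ)ᵀ * (R * Ebasis a b * Rᵀ) * (R * Dmat t * Rᵀ)
      = ((if a = t then (-1:ℝ) else 1) * (if b = t then (-1:ℝ) else 1))
          • (R * Ebasis a b * Rᵀ) := by
  have hRRt : R * Rᵀ = 1 := hR.1
  have hRtR : Rᵀ * R = 1 := mul_eq_one_comm.mp hRRt
  rw [Qflip_symm]
  have h : (R * Dmat t * Rᵀ) * (R * Ebasis a b * Rᵀ) * (R * Dmat t * Rᵀ)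
      = R * (Dmat t * (Rᵀ * R) * Ebasis a b * (Rᵀ * R) * Dmat t) * Rᵀ := by noncomm_ring
  rw [h, hRtR, Matrix.mul_one, Matrix.mul_one, Dmat_conj_Ebasis, Matrix.mul_smul,
    Matrix.smul_mul]

lemma hFun_flip (f : Mat → ℝ) (hf : ContDiff ℝ 1 f)
    (hspec : ∀ Q ∈ ON n, ∀ Z, f (Q * Z * Qᵀ) = f Z)
    {R : Mat} (hR : R ∈ SO n) (t a b : Fin n) (Z : Mat) :
    hFun f R a b ((R * Dmat t * Rᵀ) * Z * (R * Dmat t * Rᵀ)ᵀ)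
      = ((if a = t then (-1:ℝ) else 1) * (if b = t then (-1:ℝ) else 1)) * hFun f R a b Z := by
  set Q := R * Dmat t * Rᵀ with hQdef
  have hQ : Q ∈ ON n := Qflip_mem_ON hR t
  have hspecQ : ∀ W, f (Q * W * Qᵀ) = f W := hspec Q hQ
  rw [hFun, scoreG_conj f hf hQ hspecQ, frobInner_conj, hQdef, Qflip_conj_basis hR,
    frobInner_smul_right]
  rfl

lemma continuous_hFun (f : Mat → ℝ) (hf : ContDiff ℝ 1 f) (hpos : ∀ Z, 0 < f Z)
    (R : Mat) (a b : Fin n) : Continuous fun Z : Mat => hFun f R a b Z := by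
  have hg : Continuous fun Z : Mat => grad f Z :=
    continuous_matrix fun i j => (hf.continuous_fderiv one_ne_zero).clm_apply continuous_const
  have hM : Continuous fun Z : Mat => (grad f Z)ᵀ * Z :=
    (hg.matrix_transpose).matrix_mul continuous_id
  have hskew : Continuous fun Z : Mat => skewPart ((grad f Z)ᵀ * Z) :=
    Continuous.smul (f := fun _ => (2:ℝ)⁻¹) (g := fun Z => (grad f Z)ᵀ * Z - ((grad f Z)ᵀ * Z)ᵀ)
      continuous_const (hM.sub hM.matrix_transpose)
  have hinv : Continuous fun Z : Mat => (f Z)⁻¹ :=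
    hf.continuous.inv₀ fun Z => (hpos Z).ne'
  have hscore : Continuous fun Z : Mat => scoreG f Z := hinv.smul hskew
  exact ((hscore.matrix_transpose.matrix_mul continuous_const).matrix_trace)

end Flip
theorem stmt3 {n : ℕ} (hn : 2 ≤ n) (μ : Measure (Matrix (Fin n) (Fin n) ℝ))
    (hμ : IsHaarSO n μ) (f : Matrix (Fin n) (Fin n) ℝ → ℝ)
    (hf : ContDiff ℝ 1 f) (hpos : ∀ Z, 0 < f Z)
    (hspec : ∀ Q ∈ ON n, ∀ Z, f (Q * Z * Qᵀ) = f Z)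
    (hnorm : ∫ Z, f Z ∂μ = 1)
    (R : Matrix (Fin n) (Fin n) ℝ) (hR : R ∈ SO n)
    (p q r s : Fin n) (hpq : p < q) (hrs : r < s) (hne : (p, q) ≠ (r, s)) :
    (∫ Z, hFun f R p q Z * f Z ∂μ = 0) ∧
    (∫ Z, hFun f R p q Z * hFun f R r s Z * f Z ∂μ = 0) := by
  haveI := hμ.1
  have gen : ∀ φ : Matrix (Fin n) (Fin n) ℝ → ℝ, Continuous φ →
      ∀ t : Fin n, (∀ Z, φ ((R * Dmat t * Rᵀ) * Z * (R * Dmat t * Rᵀ)ᵀ) = -φ Z) →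
      ∫ Z, φ Z ∂μ = 0 := by
    intro φ hφc t hodd
    have hQ : (R * Dmat t * Rᵀ) ∈ ON n := Qflip_mem_ON hR t
    have hmap : Measure.map (fun Z => (R * Dmat t * Rᵀ) * Z * (R * Dmat t * Rᵀ)ᵀ) μ = μ :=
      conj_map_eq hμ hQ
    have h1 : ∫ Z, φ Z ∂μ
        = ∫ Z, φ ((R * Dmat t * Rᵀ) * Z * (R * Dmat t * Rᵀ)ᵀ) ∂μ := by
      conv_lhs => rw [← hmap]
      exact MeasureTheory.integral_map (measurable_conj _).aemeasurable
        (by rw [hmap]; exact hφc.aestronglyMeasurable)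
    have h2 : ∫ Z, φ ((R * Dmat t * Rᵀ) * Z * (R * Dmat t * Rᵀ)ᵀ) ∂μ = -∫ Z, φ Z ∂μ := by
      simp_rw [hodd]
      exact integral_neg _
    have := h1.trans h2
    linarith
  constructor
  · refine gen _ (((continuous_hFun f hf hpos R p q)).mul hf.continuous) p fun Z => ?_
    rw [hFun_flip f hf hspec hR p p q Z, hspec _ (Qflip_mem_ON hR p) Z]
    simp [hpq.ne']
  · -- choose the flip index
    obtain ⟨t, hsign⟩ : ∃ t : Fin n,
        ((if p = t then (-1:ℝ) else 1) * (if q = t then (-1:ℝ) else 1))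
          * ((if r = t then (-1:ℝ) else 1) * (if s = t then (-1:ℝ) else 1)) = -1 := by
      by_cases hpr : p = r
      · have hsq : s ≠ q := by
          intro h
          exact hne (by subst hpr; subst h; rfl)
        have hrq : r ≠ q := by rw [← hpr]; exact hpq.ne
        refine ⟨q, ?_⟩
        simp [hpq.ne, hsq, hrq]
      · by_cases hps : p = s
        · have hrq : r ≠ q := by
            have : r < q := lt_trans (hps ▸ hrs) hpq
            exact this.ne
          have hsq : s ≠ q := by rw [← hps]; exact hpq.ne
          refine ⟨q, ?_⟩
          simp [hpq.ne, hsq, hrq]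
        · refine ⟨p, ?_⟩
          have hqp : q ≠ p := hpq.ne'
          have hrp : r ≠ p := fun h => hpr h.symm
          have hsp : s ≠ p := fun h => hps h.symm
          simp [hqp, hrp, hsp]
    refine gen _ ((((continuous_hFun f hf hpos R p q)).mul
      ((continuous_hFun f hf hpos R r s))).mul hf.continuous) t fun Z => ?_
    rw [hFun_flip f hf hspec hR t p q Z, hFun_flip f hf hspec hR t r s Z,
      hspec _ (Qflip_mem_ON hR t) Z]
    linear_combination (hFun f R p q Z * hFun f R r s Z * f Z) * hsign
end
end

section
/- Let n ≥ 1 and let f̃ : ℝ^{n×n} → ℝ be differentiable, positive, invariant under orthogonal conjugation (f̃(QZQᵀ) = f̃(Z) for all Q ∈ O(n), Z ∈ ℝ^{n×n}) and under transposition (f̃(Zᵀ) = f̃(Z) for all Z). Define the score map G : SO(n) → ℝ^{n×n} by G(Z) = (1/f̃(Z))·skew((∇f̃(Z))ᵀZ). Then G(Z) is skew-symmetric for every Z ∈ SO(n), and for every Q ∈ O(n) and Z ∈ SO(n): G(QZQᵀ) = Q·G(Z)·Qᵀ and G(Zᵀ) = −G(Z). -/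
open Matrix

noncomputable section

attribute [local instance] Matrix.normedAddCommGroup Matrix.normedSpace

namespace Stmt9Aux

abbrev Mat (n : ℕ) := Matrix (Fin n) (Fin n) ℝ

variable {n : ℕ}

/-- Conjugation by `Q` as a continuous linear map. -/
def conjCLM (Q : Mat n) : Mat n →L[ℝ] Mat n :=
  LinearMap.toContinuousLinearMap
    { toFun := fun H => Q * H * Qᵀ
      map_add' := by intros; simp [Matrix.mul_add, Matrix.add_mul]
      map_smul' := by intros; simp [Matrix.mul_smul, Matrix.smul_mul] }

/-- Transposition as a continuous linear map. -/
def transCLM : Mat n →L[ℝ] Mat n :=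
  LinearMap.toContinuousLinearMap
    { toFun := fun H => Hᵀ
      map_add' := by intros; simp [Matrix.transpose_add]
      map_smul' := by intros; simp }

lemma conjCLM_apply (Q H : Mat n) : conjCLM Q H = Q * H * Qᵀ := rfl

lemma transCLM_apply (H : Mat n) : (transCLM : Mat n →L[ℝ] Mat n) H = Hᵀ := rfl

lemma fderiv_eq_sum (f : Mat n → ℝ) (Z H : Mat n) :
    fderiv ℝ f Z H = ∑ k, ∑ l, H k l * grad f Z k l := by
  conv_lhs => rw [matrix_eq_sum_single H]
  rw [map_sum]
  refine Finset.sum_congr rfl fun k _ => ?_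
  rw [map_sum]
  refine Finset.sum_congr rfl fun l _ => ?_
  have h : single k l (H k l) = H k l • single k l (1 : ℝ) := by
    rw [smul_single]; simp
  rw [h, _root_.map_smul]
  simp [grad, smul_eq_mul]

lemma entry_conj (Q : Mat n) (i j k l : Fin n) :
    (Qᵀ * single i j (1 : ℝ) * Q) k l = Q i k * Q j l := by
  simp [Matrix.mul_apply, Matrix.single, ite_and, Finset.sum_ite_eq]

lemma fderiv_conj (f : Mat n → ℝ) (hf : Differentiable ℝ f) (Q : Mat n)
    (hspec : ∀ Z, f (Q * Z * Qᵀ) = f Z) (Z H : Mat n) :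
    fderiv ℝ f Z H = fderiv ℝ f (Q * Z * Qᵀ) (Q * H * Qᵀ) := by
  have h1 : f = f ∘ (conjCLM Q) := by
    funext W; simp [conjCLM_apply, hspec W]
  conv_lhs => rw [h1]
  erw [fderiv_comp Z (hf _) (conjCLM Q).differentiableAt,
    ContinuousLinearMap.fderiv]
  rfl

lemma grad_conj (f : Mat n → ℝ) (hf : Differentiable ℝ f) {Q : Mat n} (hQ : Q * Qᵀ = 1)
    (hspec : ∀ Z, f (Q * Z * Qᵀ) = f Z) (Z : Mat n) :
    grad f (Q * Z * Qᵀ) = Q * grad f Z * Qᵀ := by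
  have hQ' : Qᵀ * Q = 1 := mul_eq_one_comm.mp hQ
  ext i j
  have h := fderiv_conj f hf Q hspec Z (Qᵀ * single i j (1 : ℝ) * Q)
  have h2 : Q * (Qᵀ * single i j (1 : ℝ) * Q) * Qᵀ = single i j (1 : ℝ) := by
    calc Q * (Qᵀ * single i j (1 : ℝ) * Q) * Qᵀ
        = (Q * Qᵀ) * single i j (1 : ℝ) * (Q * Qᵀ) := by
          simp only [Matrix.mul_assoc]
      _ = single i j (1 : ℝ) := by rw [hQ]; simp
  rw [h2] at h
  rw [fderiv_eq_sum] at h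
  have hg : grad f (Q * Z * Qᵀ) i j = fderiv ℝ f (Q * Z * Qᵀ) (single i j 1) := rfl
  rw [hg, ← h]
  simp only [entry_conj]
  rw [Matrix.mul_apply]
  simp only [Matrix.mul_apply, Matrix.transpose_apply, Finset.sum_mul, Finset.mul_sum]
  rw [Finset.sum_comm]
  refine Finset.sum_congr rfl fun k _ => Finset.sum_congr rfl fun l _ => by ring

lemma fderiv_trans (f : Mat n → ℝ) (hf : Differentiable ℝ f)
    (htrans : ∀ Z, f Zᵀ = f Z) (Z H : Mat n) :
    fderiv ℝ f Z H = fderiv ℝ f Zᵀ Hᵀ := by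
  have h1 : f = f ∘ (transCLM (n := n)) := by
    funext W; simp [transCLM_apply, htrans W]
  conv_lhs => rw [h1]
  erw [fderiv_comp Z (hf _) (transCLM (n := n)).differentiableAt,
    ContinuousLinearMap.fderiv]
  rfl

lemma grad_trans (f : Mat n → ℝ) (hf : Differentiable ℝ f)
    (htrans : ∀ Z, f Zᵀ = f Z) (Z : Mat n) :
    grad f Zᵀ = (grad f Z)ᵀ := by
  ext i j
  have h := fderiv_trans f hf htrans Z (single j i (1 : ℝ))
  have h2 : (single j i (1 : ℝ))ᵀ = single i j (1 : ℝ) := by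
    ext a b
    simp [Matrix.single, and_comm]
  rw [h2] at h
  show fderiv ℝ f Zᵀ (single i j 1) = grad f Z j i
  rw [← h]; rfl

lemma skewPart_transpose (A : Mat n) : skewPart Aᵀ = -skewPart A := by
  simp [skewPart, smul_sub]

lemma transpose_skewPart (A : Mat n) : (skewPart A)ᵀ = -skewPart A := by
  simp [skewPart, smul_sub]

lemma skewPart_conj (Q A : Mat n) :
    skewPart (Q * A * Qᵀ) = Q * skewPart A * Qᵀ := by
  simp [skewPart, Matrix.transpose_mul, Matrix.mul_sub, Matrix.sub_mul,
    Matrix.smul_mul, Matrix.mul_smul, Matrix.mul_assoc]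

end Stmt9Aux

theorem stmt9 {n : ℕ} (hn : 1 ≤ n) (f : Matrix (Fin n) (Fin n) ℝ → ℝ)
    (hf : Differentiable ℝ f) (hpos : ∀ Z, 0 < f Z)
    (hspec : ∀ Q ∈ ON n, ∀ Z, f (Q * Z * Qᵀ) = f Z)
    (htrans : ∀ Z, f Zᵀ = f Z) :
    (∀ Z ∈ SO n, (scoreG f Z)ᵀ = -scoreG f Z) ∧
    (∀ Q ∈ ON n, ∀ Z ∈ SO n, scoreG f (Q * Z * Qᵀ) = Q * scoreG f Z * Qᵀ) ∧
    (∀ Z ∈ SO n, scoreG f Zᵀ = -scoreG f Z) := by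
  refine ⟨fun Z _ => ?_, fun Q hQ Z _ => ?_, fun Z hZ => ?_⟩
  · -- skew-symmetry
    rw [scoreG, Matrix.transpose_smul, Stmt9Aux.transpose_skewPart, smul_neg]
  · -- equivariance
    have hQ' : Qᵀ * Q = 1 := mul_eq_one_comm.mp hQ
    have hgrad := Stmt9Aux.grad_conj f hf hQ (hspec Q hQ) Z
    rw [scoreG, hgrad, hspec Q hQ Z]
    have h3 : (Q * grad f Z * Qᵀ)ᵀ * (Q * Z * Qᵀ) = Q * ((grad f Z)ᵀ * Z) * Qᵀ := by
      simp only [Matrix.transpose_mul, Matrix.transpose_transpose, Matrix.mul_assoc]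
      rw [← Matrix.mul_assoc Qᵀ Q (Z * Qᵀ), hQ', Matrix.one_mul]
    rw [h3, Stmt9Aux.skewPart_conj, scoreG]
    simp [Matrix.mul_smul, Matrix.smul_mul]
  · -- transposition antisymmetry
    obtain ⟨hZo, -⟩ := hZ
    have hZ' : Zᵀ * Z = 1 := mul_eq_one_comm.mp hZo
    set G := grad f Z with hG
    -- G commutes with Z
    have hfix : G = Z * G * Zᵀ := by
      have := Stmt9Aux.grad_conj f hf hZo (hspec Z hZo) Z
      have hZZ : Z * Z * Zᵀ = Z := by
        rw [Matrix.mul_assoc, hZo, Matrix.mul_one]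
      rw [hZZ] at this
      exact this
    have hcomm : G * Zᵀ = Zᵀ * G := by
      have h1 : G * Zᵀ = Z * G * Zᵀ * Zᵀ := by rw [← hfix]
      have h2 : Zᵀ * G = Zᵀ * (Z * G * Zᵀ) := by rw [← hfix]
      calc G * Zᵀ = (Zᵀ * Z) * (G * Zᵀ) := by rw [hZ']; simp
        _ = Zᵀ * (Z * G * Zᵀ) := by simp only [Matrix.mul_assoc]
        _ = Zᵀ * G := by rw [← hfix]
    have hgt := Stmt9Aux.grad_trans f hf htrans Z
    rw [scoreG, hgt, Matrix.transpose_transpose, htrans Z, ← hG, hcomm]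
    have : Zᵀ * G = (Gᵀ * Z)ᵀ := by simp [Matrix.transpose_mul]
    rw [this, Stmt9Aux.skewPart_transpose, scoreG, ← hG]
    simp
end
end
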